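/- Every clique-acyclic orientation of a chordal graph is a digraph without a directed cycle. -/

import Mathlib

/-- `G` has an induced cycle of length `n`. -/
def HasInducedCycle {V : Type*} (G : SimpleGraph V) (n : ℕ) : Prop :=
  ∃ f : Fin n → V, Function.Injective f ∧
    ∀ i j : Fin n, G.Adj (f i) (f j) ↔ (SimpleGraph.cycleGraph n).Adj i j

/-- `G` is chordal: no induced cycle of length 4 or more. -/
def IsChordal {V : Type*} (G : SimpleGraph V) : Prop :=
  ∀ n : ℕ, 4 ≤ n → ¬ HasInducedCycle G n

private lemma transGen_chain {V : Type*} {A : V → V → Prop} {v w : V}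
    (h : Relation.TransGen A v w) :
    ∃ n : ℕ, 0 < n ∧ ∃ f : ℕ → V, f 0 = v ∧ f n = w ∧ ∀ k < n, A (f k) (f (k+1)) := by
  induction h with
  | @single b hab =>
    refine ⟨1, one_pos, fun k => if k = 0 then v else b, by simp, by simp, ?_⟩
    intro k hk
    interval_cases k
    simpa using hab
  | @tail b c hab hbc ih =>
    obtain ⟨n, hn, f, hf0, hfn, harc⟩ := ih
    refine ⟨n+1, by omega, fun k => if k ≤ n then f k else c, by simp [hf0], by simp, ?_⟩
    intro k hk
    rcases lt_or_eq_of_le (Nat.lt_succ_iff.mp hk) with h1 | h1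
    · simpa [Nat.le_of_lt h1, Nat.succ_le_of_lt h1] using harc k h1
    · subst h1
      simpa [hfn] using hbc

/-- Every clique-acyclic orientation of a chordal graph has no directed cycle. -/
theorem chordal_clique_acyclic_orientation_acyclic {V : Type*}
    (G : SimpleGraph V) (hchordal : IsChordal G)
    (A : V → V → Prop)
    (hsub : ∀ u v : V, A u v → G.Adj u v)
    (hor : ∀ u v : V, G.Adj u v → (A u v ↔ ¬ A v u))
    (hca : ¬ ∃ a b c : V, A a b ∧ A b c ∧ A c a) :
    ∀ v : V, ¬ Relation.TransGen A v v := by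
  classical
  intro v hv
  set Cyc : ℕ → Prop := fun n =>
    0 < n ∧ ∃ f : ℕ → V, (∀ k < n, A (f k) (f (k+1))) ∧ f n = f 0 with hCycdef
  have hex : ∃ n, Cyc n := by
    obtain ⟨n, hn, f, hf0, hfn, harc⟩ := transGen_chain hv
    exact ⟨n, hn, f, harc, by rw [hfn, hf0]⟩
  obtain ⟨n, ⟨hnpos, f, harc, hper⟩, hmin'⟩ :
      ∃ n, Cyc n ∧ ∀ m < n, ¬ Cyc m :=
    ⟨Nat.find hex, Nat.find_spec hex, fun m hm => Nat.find_min hex hm⟩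
  have hmin : ∀ m, 0 < m → m < n →
      ¬ ∃ g : ℕ → V, (∀ k < m, A (g k) (g (k+1))) ∧ g m = g 0 := by
    intro m hm hmn hg
    exact hmin' m hmn ⟨hm, hg⟩
  -- no "forward" chords
  have forw : ∀ p q : ℕ, p + 1 < q → q ≤ n → ¬ A (f p) (f q) := by
    intro p q hpq hq hA
    apply hmin (n - q + p + 1) (by omega) (by omega)
    refine ⟨fun k => if k ≤ n - q then f (q + k)
      else if k ≤ n - q + p then f (k - (n - q)) else f q, ?_, ?_⟩
    · intro k hk
      beta_reduce
      by_cases h1 : k < n - q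
      · rw [if_pos (by omega : k ≤ n - q), if_pos (by omega : k + 1 ≤ n - q),
          (by omega : q + (k+1) = (q + k) + 1)]
        exact harc (q + k) (by omega)
      · by_cases h2 : k = n - q
        · subst h2
          rw [if_pos (le_refl _), (by omega : q + (n - q) = n), hper,
            if_neg (by omega : ¬ n - q + 1 ≤ n - q)]
          by_cases h3 : p = 0
          · rw [if_neg (by omega : ¬ n - q + 1 ≤ n - q + p)]
            subst h3
            exact hA
          · rw [if_pos (by omega : n - q + 1 ≤ n - q + p),
              (by omega : n - q + 1 - (n - q) = 1)]
            exact harc 0 hnpos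
        · by_cases h4 : k < n - q + p
          · rw [if_neg (by omega : ¬ k ≤ n - q), if_pos (by omega : k ≤ n - q + p),
              if_neg (by omega : ¬ k + 1 ≤ n - q), if_pos (by omega : k + 1 ≤ n - q + p),
              (by omega : k + 1 - (n - q) = (k - (n - q)) + 1)]
            exact harc (k - (n - q)) (by omega)
          · rw [if_neg (by omega : ¬ k ≤ n - q), if_pos (by omega : k ≤ n - q + p),
              (by omega : k - (n - q) = p),
              if_neg (by omega : ¬ k + 1 ≤ n - q), if_neg (by omega : ¬ k + 1 ≤ n - q + p)]
            exact hA
    · beta_reduce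
      rw [if_neg (by omega : ¬ n - q + p + 1 ≤ n - q),
        if_neg (by omega : ¬ n - q + p + 1 ≤ n - q + p),
        if_pos (Nat.zero_le _), Nat.add_zero]
  -- no "backward" chords
  have back : ∀ p q : ℕ, p < q → q ≤ n → q - p + 1 < n → ¬ A (f q) (f p) := by
    intro p q hpq hq hlt hA
    apply hmin (q - p + 1) (by omega) hlt
    refine ⟨fun k => if k ≤ q - p then f (p + k) else f p, ?_, ?_⟩
    · intro k hk
      beta_reduce
      by_cases h1 : k < q - p
      · rw [if_pos (by omega : k ≤ q - p), if_pos (by omega : k + 1 ≤ q - p),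
          (by omega : p + (k+1) = (p + k) + 1)]
        exact harc (p + k) (by omega)
      · have h2 : k = q - p := by omega
        subst h2
        rw [if_pos (le_refl _), (by omega : p + (q - p) = q),
          if_neg (by omega : ¬ q - p + 1 ≤ q - p)]
        exact hA
    · beta_reduce
      rw [if_neg (by omega : ¬ q - p + 1 ≤ q - p), if_pos (Nat.zero_le _), Nat.add_zero]
  -- vertices are distinct
  have hinj : ∀ p q : ℕ, p < q → q < n → f p ≠ f q := by
    intro p q hpq hq heq
    apply hmin (q - p) (by omega) (by omega)
    refine ⟨fun k => f (p + k), ?_, ?_⟩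
    · intro k hk
      beta_reduce
      rw [(by omega : p + (k+1) = (p + k) + 1)]
      exact harc (p + k) (by omega)
    · beta_reduce
      rw [(by omega : p + (q - p) = q), Nat.add_zero]
      exact heq.symm
  -- n is at least 4
  have hn4 : 4 ≤ n := by
    by_contra hlt
    push_neg at hlt
    interval_cases n
    · have h01 := harc 0 (by omega)
      rw [show (0:ℕ)+1 = 1 from rfl, hper] at h01
      exact G.irrefl (hsub _ _ h01)
    · have h01 := harc 0 (by omega)
      have h12 := harc 1 (by omega)
      rw [hper] at h12
      exact (hor _ _ (hsub _ _ h01)).mp h01 h12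
    · have h01 := harc 0 (by omega)
      have h12 := harc 1 (by omega)
      have h23 := harc 2 (by omega)
      rw [hper] at h23
      exact hca ⟨f 0, f 1, f 2, h01, h12, h23⟩
  haveI : NeZero n := ⟨by omega⟩
  -- characterization of subtraction = 1 in Fin n
  have key : ∀ i j : Fin n, (j - i).val = 1 ↔
      (j.val = i.val + 1 ∨ (i.val = n - 1 ∧ j.val = 0)) := by
    intro i j
    constructor
    · intro h
      have hji : j - i = 1 := by
        apply Fin.ext
        rw [h, Fin.val_one']
        exact (Nat.mod_eq_of_lt (by omega)).symm
      have hj : j = 1 + i := sub_eq_iff_eq_add.mp hji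
      have hv : j.val = (1 + i.val) % n := by
        rw [hj, Fin.add_def, Fin.val_one', Nat.mod_eq_of_lt (show 1 < n by omega)]
      rcases Nat.lt_or_ge (i.val + 1) n with h' | h'
      · left
        rw [hv, (by omega : 1 + i.val = i.val + 1), Nat.mod_eq_of_lt h']
      · right
        have hi := i.isLt
        refine ⟨by omega, ?_⟩
        rw [hv, (by omega : 1 + i.val = n), Nat.mod_self]
    · intro h
      have hi := i.isLt
      have hj := j.isLt
      rcases h with h | ⟨h1, h2⟩
      · rw [Fin.sub_def]
        show (n - i.val + j.val) % n = 1
        rw [(by omega : n - i.val + j.val = n + 1), Nat.add_mod_left,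
          Nat.mod_eq_of_lt (by omega)]
      · rw [Fin.sub_def]
        show (n - i.val + j.val) % n = 1
        rw [(by omega : n - i.val + j.val = 1), Nat.mod_eq_of_lt (by omega)]
  -- adjacency forces consecutiveness
  have main : ∀ a b : ℕ, a < b → b < n → G.Adj (f a) (f b) →
      b = a + 1 ∨ (a = 0 ∧ b = n - 1) := by
    intro a b hab hb hadj
    by_cases hA : A (f a) (f b)
    · left
      by_contra hne
      exact forw a b (by omega) (by omega) hA
    · have hA' : A (f b) (f a) := by
        by_contra h
        exact hA ((hor _ _ hadj).mpr h)
      right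
      by_contra hne
      exact back a b hab (by omega) (by omega) hA'
  have adjof : ∀ a b : ℕ, b < n → (b = a + 1 ∨ (a = n - 1 ∧ b = 0)) →
      G.Adj (f a) (f b) := by
    intro a b hb h
    rcases h with h | ⟨h1, h2⟩
    · subst h
      exact hsub _ _ (harc a (by omega))
    · subst h1; subst h2
      have h3 := harc (n-1) (by omega)
      rw [(by omega : n - 1 + 1 = n), hper] at h3
      exact hsub _ _ h3
  -- build the induced cycle
  apply hchordal n hn4
  refine ⟨fun i => f i.val, ?_, ?_⟩
  · intro i j hij
    by_contra hne
    have hne' : i.val ≠ j.val := fun h => hne (Fin.ext h)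
    rcases Nat.lt_or_ge i.val j.val with h | h
    · exact hinj _ _ h j.isLt hij
    · exact hinj _ _ (by omega) i.isLt hij.symm
  · intro i j
    beta_reduce
    rw [SimpleGraph.cycleGraph_adj']
    constructor
    · intro hadj
      have hne : i.val ≠ j.val := by
        intro h
        rw [h] at hadj
        exact G.irrefl hadj
      rcases Nat.lt_or_ge i.val j.val with h | h
      · rcases main _ _ h j.isLt hadj with h' | ⟨h1, h2⟩
        · exact Or.inr ((key i j).mpr (Or.inl h'))
        · exact Or.inl ((key j i).mpr (Or.inr ⟨h2, h1⟩))
      · rcases main _ _ (by omega) i.isLt hadj.symm with h' | ⟨h1, h2⟩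
        · exact Or.inl ((key j i).mpr (Or.inl h'))
        · exact Or.inr ((key i j).mpr (Or.inr ⟨h2, h1⟩))
    · intro h
      rcases h with h | h
      · rcases (key j i).mp h with h' | ⟨h1, h2⟩
        · exact (adjof _ _ i.isLt (Or.inl h')).symm
        · exact (adjof _ _ i.isLt (Or.inr ⟨h1, h2⟩)).symm
      · rcases (key i j).mp h with h' | ⟨h1, h2⟩
        · exact adjof _ _ j.isLt (Or.inl h')
        · exact adjof _ _ j.isLt (Or.inr ⟨h1, h2⟩)
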